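/- With π_a = π_b = π a probability measure on ℂ with finite second moment, m₁ = ∫ x dπ(x) and m₂ = ∫ |x|² dπ(x), set A = 1 + 2Pm₂ and B = (P²/K)·(m₂² + (K−1)|m₁|⁴). Then E[det G_1] = A, E[det G_2] = A² − B, and for every m ≥ 3, E[det G_m] = A·E[det G_{m−1}] − B·E[det G_{m−2}], where G_m denotes the leading principal m × m submatrix of G_M (for any M ≥ m). -/

import Mathlib

open MeasureTheory ProbabilityTheory Filter Matrix

/-- The `M × K(M+1)` two-block-diagonal channel matrix built from the fading
vectors `a`, `b` (indexed from `1` as in the paper); the column index set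
`Fin (M+1) × Fin K` encodes the `M+1` blocks of `K` columns. -/
def HmatK (K M : ℕ) (a b : ℕ → Fin K → ℂ) :
    Matrix (Fin M) (Fin (M + 1) × Fin K) ℂ :=
  fun i jk =>
    if (jk.1 : ℕ) = (i : ℕ) then a ((i : ℕ) + 1) jk.2
    else if (jk.1 : ℕ) = (i : ℕ) + 1 then b ((i : ℕ) + 1) jk.2 else 0

/-- `det (I_m + (P/K) · H_m H_m*)`, the determinant of the leading principal
`m × m` submatrix `G_m` (which depends only on `a_1,…,a_m`, `b_1,…,b_m`). -/
noncomputable def detGK (K m : ℕ) (P : ℝ) (a b : ℕ → Fin K → ℂ) : ℂ :=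
  Matrix.det (1 + ((P / K : ℝ) : ℂ) • (HmatK K m a b * (HmatK K m a b)ᴴ))

namespace Statement8Aux

/-- tridiagonal matrix with diagonal `d`, superdiagonal `u`, subdiagonal `l`. -/
def trid (d u l : ℕ → ℂ) (n : ℕ) : Matrix (Fin n) (Fin n) ℂ :=
  fun i j =>
    if (i : ℕ) = (j : ℕ) then d i
    else if (i : ℕ) + 1 = (j : ℕ) then u i
    else if (j : ℕ) + 1 = (i : ℕ) then l j else 0

lemma trid_val (d u l : ℕ → ℂ) {n m : ℕ} (i j : Fin n) (i' j' : Fin m)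
    (hi : (i : ℕ) = (i' : ℕ)) (hj : (j : ℕ) = (j' : ℕ)) :
    trid d u l n i j = trid d u l m i' j' := by
  simp only [trid, hi, hj]

lemma trid_det_rec (d u l : ℕ → ℂ) (n : ℕ) :
    (trid d u l (n + 2)).det
      = d (n + 1) * (trid d u l (n + 1)).det - u n * l n * (trid d u l n).det := by
  have hlast : ((Fin.last (n+1) : Fin (n+2)) : ℕ) = n + 1 := rfl
  rw [det_succ_row _ (Fin.last (n + 1)), Fin.sum_univ_castSucc, Fin.sum_univ_castSucc]
  have h1 : ∀ j : Fin n, (-1 : ℂ) ^ ((Fin.last (n+1) : ℕ) + ((j.castSucc.castSucc : Fin (n+2)) : ℕ))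
      * trid d u l (n+2) (Fin.last (n+1)) j.castSucc.castSucc
      * ((trid d u l (n+2)).submatrix (Fin.last (n+1)).succAbove j.castSucc.castSucc.succAbove).det = 0 := by
    intro j
    have hj : ((j.castSucc.castSucc : Fin (n+2)) : ℕ) = (j : ℕ) := rfl
    have hjn := j.isLt
    have : trid d u l (n+2) (Fin.last (n+1)) j.castSucc.castSucc = 0 := by
      simp only [trid, hlast, hj]
      rw [if_neg (by omega), if_neg (by omega), if_neg (by omega)]
    rw [this, mul_zero, zero_mul]
  rw [Finset.sum_eq_zero (fun j _ => h1 j), zero_add]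
  have hdiag : trid d u l (n+2) (Fin.last (n+1)) (Fin.last (n+1)) = d (n+1) := by
    simp only [trid, hlast]; simp
  have hminor1 : (trid d u l (n+2)).submatrix (Fin.last (n+1)).succAbove (Fin.last (n+1)).succAbove
      = trid d u l (n+1) := by
    ext i j
    rw [Fin.succAbove_last, submatrix_apply]
    exact trid_val d u l _ _ _ _ rfl rfl
  have hcs : (((Fin.last n).castSucc : Fin (n+2)) : ℕ) = n := rfl
  have hsub : trid d u l (n+2) (Fin.last (n+1)) (Fin.last n).castSucc = l n := by
    simp only [trid, hlast, hcs]
    rw [if_neg (by omega), if_neg (by omega)]; simp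
  have hminor2 : ((trid d u l (n+2)).submatrix (Fin.last (n+1)).succAbove
      (Fin.last n).castSucc.succAbove).det = u n * (trid d u l n).det := by
    set M := (trid d u l (n+2)).submatrix (Fin.last (n+1)).succAbove (Fin.last n).castSucc.succAbove with hM
    have hcol : ∀ i : Fin (n+1), M i (Fin.last n)
        = trid d u l (n+2) i.castSucc (Fin.last (n+1)) := by
      intro i
      rw [hM, submatrix_apply, Fin.succAbove_last]
      congr 1
      have : (Fin.last n).castSucc.succAbove (Fin.last n) = Fin.last (n+1) := by
        rw [Fin.succAbove]
        rw [if_neg (by simp)]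
        rfl
      rw [this]
    rw [det_succ_column _ (Fin.last n), Fin.sum_univ_castSucc]
    have h2 : ∀ i : Fin n, (-1 : ℂ) ^ (((i.castSucc : Fin (n+1)) : ℕ) + ((Fin.last n : Fin (n+1)) : ℕ))
        * M i.castSucc (Fin.last n)
        * (M.submatrix i.castSucc.succAbove (Fin.last n).succAbove).det = 0 := by
      intro i
      have hin := i.isLt
      have : M i.castSucc (Fin.last n) = 0 := by
        rw [hcol]
        simp only [trid]
        rw [if_neg (by simp; omega), if_neg (by simp; omega), if_neg (by simp; omega)]
      rw [this, mul_zero, zero_mul]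
    rw [Finset.sum_eq_zero (fun i _ => h2 i), zero_add]
    have hent : M (Fin.last n) (Fin.last n) = u n := by
      rw [hcol]
      simp only [trid]
      rw [if_neg (by simp), if_pos (by simp)]
      simp
    have hminor3 : M.submatrix (Fin.last n).succAbove (Fin.last n).succAbove = trid d u l n := by
      ext i j
      have hjlt := j.isLt
      have hsa : (Fin.last n).castSucc.succAbove j.castSucc = j.castSucc.castSucc := by
        rw [Fin.succAbove, if_pos (by simp [Fin.lt_def])]
      simp only [submatrix_apply, Fin.succAbove_last, hM, hsa]
      exact trid_val d u l _ _ _ _ rfl rfl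
    rw [hent, hminor3]
    simp
  rw [hdiag, hminor1, hsub, hminor2, hlast, hcs]
  have hs1 : (-1 : ℂ) ^ (n + 1 + (n + 1)) = 1 := by
    rw [(by omega : n + 1 + (n + 1) = 2*(n+1)), pow_mul]; simp
  have hs2 : (-1 : ℂ) ^ (n + 1 + n) = -1 := by
    rw [(by omega : n + 1 + n = 2*n+1), pow_succ, pow_mul]; simp
  rw [hs1, hs2]; ring

noncomputable def ddf (P : ℝ) (K : ℕ) (a b : ℕ → Fin K → ℂ) (i : ℕ) : ℂ :=
  1 + ((P / K : ℝ) : ℂ) * ((∑ k, a (i+1) k * (starRingEnd ℂ) (a (i+1) k))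
        + ∑ k, b (i+1) k * (starRingEnd ℂ) (b (i+1) k))

noncomputable def uuf (P : ℝ) (K : ℕ) (a b : ℕ → Fin K → ℂ) (i : ℕ) : ℂ :=
  ((P / K : ℝ) : ℂ) * ∑ k, b (i+1) k * (starRingEnd ℂ) (a (i+2) k)

noncomputable def llf (P : ℝ) (K : ℕ) (a b : ℕ → Fin K → ℂ) (i : ℕ) : ℂ :=
  ((P / K : ℝ) : ℂ) * ∑ k, a (i+2) k * (starRingEnd ℂ) (b (i+1) k)

lemma detGK_eq_trid (K m : ℕ) (P : ℝ) (a b : ℕ → Fin K → ℂ) :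
    detGK K m P a b = (trid (ddf P K a b) (uuf P K a b) (llf P K a b) m).det := by
  unfold detGK
  congr 1
  ext i j
  have hH : ∀ (r : Fin m) (p : Fin (m+1) × Fin K), (p.1 : ℕ) ≠ (r : ℕ) →
      (p.1 : ℕ) ≠ (r : ℕ) + 1 → HmatK K m a b r p = 0 := by
    intro r p h1 h2
    simp only [HmatK, if_neg h1, if_neg h2]
  have hsum : (HmatK K m a b * (HmatK K m a b)ᴴ) i j
      = ∑ j' : Fin (m+1), ∑ k : Fin K,
          HmatK K m a b i (j', k) * (starRingEnd ℂ) (HmatK K m a b j (j', k)) := by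
    rw [mul_apply, Fintype.sum_prod_type]
    rfl
  rcases eq_or_ne (i : ℕ) (j : ℕ) with hij | hij
  · have hij' : i = j := Fin.ext hij
    subst hij'
    rw [Matrix.add_apply, Matrix.smul_apply, one_apply_eq, hsum, smul_eq_mul]
    rw [show (trid (ddf P K a b) (uuf P K a b) (llf P K a b) m i i) = ddf P K a b i by
      simp only [trid]; simp]
    have hz : ∀ j' : Fin (m+1), j' ∉ ({⟨(i:ℕ), by omega⟩, ⟨(i:ℕ)+1, by omega⟩} : Finset (Fin (m+1))) →
        (∑ k : Fin K, HmatK K m a b i (j', k) * (starRingEnd ℂ) (HmatK K m a b i (j', k))) = 0 := by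
      intro j' hj'
      simp only [Finset.mem_insert, Finset.mem_singleton] at hj'
      push_neg at hj'
      have h1 : (j' : ℕ) ≠ (i : ℕ) := fun h => hj'.1 (Fin.ext h)
      have h2 : (j' : ℕ) ≠ (i : ℕ) + 1 := fun h => hj'.2 (Fin.ext h)
      exact Finset.sum_eq_zero fun k _ => by rw [hH i _ h1 h2, zero_mul]
    rw [← Finset.sum_subset (Finset.subset_univ _) (fun x _ hx => hz x hx)]
    rw [Finset.sum_pair (by simp [Fin.ext_iff])]
    have e1 : (∑ k : Fin K, HmatK K m a b i ((⟨(i:ℕ), by omega⟩ : Fin (m+1)), k)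
        * (starRingEnd ℂ) (HmatK K m a b i ((⟨(i:ℕ), by omega⟩ : Fin (m+1)), k)))
        = ∑ k, a ((i:ℕ)+1) k * (starRingEnd ℂ) (a ((i:ℕ)+1) k) :=
      Finset.sum_congr rfl fun k _ => by simp [HmatK]
    have e2 : (∑ k : Fin K, HmatK K m a b i ((⟨(i:ℕ)+1, by omega⟩ : Fin (m+1)), k)
        * (starRingEnd ℂ) (HmatK K m a b i ((⟨(i:ℕ)+1, by omega⟩ : Fin (m+1)), k)))
        = ∑ k, b ((i:ℕ)+1) k * (starRingEnd ℂ) (b ((i:ℕ)+1) k) :=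
      Finset.sum_congr rfl fun k _ => by simp [HmatK]
    rw [e1, e2, ddf]
  · rcases eq_or_ne ((i : ℕ) + 1) (j : ℕ) with hsup | hsup
    · rw [Matrix.add_apply, Matrix.smul_apply, one_apply_ne (by simp [Fin.ext_iff]; omega), hsum, smul_eq_mul]
      rw [show (trid (ddf P K a b) (uuf P K a b) (llf P K a b) m i j) = uuf P K a b i by
        simp only [trid]; rw [if_neg hij, if_pos hsup]]
      have hz : ∀ j' : Fin (m+1), j' ≠ ⟨(i:ℕ)+1, by omega⟩ →
          (∑ k : Fin K, HmatK K m a b i (j', k) * (starRingEnd ℂ) (HmatK K m a b j (j', k))) = 0 := by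
        intro j' hj'
        have h' : (j' : ℕ) ≠ (i : ℕ) + 1 := fun h => hj' (Fin.ext h)
        refine Finset.sum_eq_zero fun k _ => ?_
        rcases eq_or_ne ((j' : ℕ)) ((i : ℕ)) with h0 | h0
        · rw [hH j (j', k) (by simp; omega) (by simp; omega), map_zero, mul_zero]
        · rw [hH i (j', k) h0 h', zero_mul]
      rw [Finset.sum_eq_single (⟨(i:ℕ)+1, by omega⟩ : Fin (m+1)) (fun j' _ h => hz j' h)
        (by intro h; exact absurd (Finset.mem_univ _) h)]
      have e3 : (∑ k : Fin K, HmatK K m a b i ((⟨(i:ℕ)+1, by omega⟩ : Fin (m+1)), k)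
          * (starRingEnd ℂ) (HmatK K m a b j ((⟨(i:ℕ)+1, by omega⟩ : Fin (m+1)), k)))
          = ∑ k, b ((i:ℕ)+1) k * (starRingEnd ℂ) (a ((i:ℕ)+2) k) :=
        Finset.sum_congr rfl fun k _ => by
          simp only [HmatK]
          norm_num
          rw [if_pos hsup, show (j:ℕ)+1 = (i:ℕ)+2 by omega]
          exact Or.inl rfl
      rw [e3, uuf, zero_add]
    · rcases eq_or_ne ((j : ℕ) + 1) (i : ℕ) with hsub | hsub
      · rw [Matrix.add_apply, Matrix.smul_apply, one_apply_ne (by simp [Fin.ext_iff]; omega), hsum, smul_eq_mul]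
        rw [show (trid (ddf P K a b) (uuf P K a b) (llf P K a b) m i j) = llf P K a b j by
          simp only [trid]; rw [if_neg hij, if_neg hsup, if_pos hsub]]
        have hz : ∀ j' : Fin (m+1), j' ≠ ⟨(i:ℕ), by omega⟩ →
            (∑ k : Fin K, HmatK K m a b i (j', k) * (starRingEnd ℂ) (HmatK K m a b j (j', k))) = 0 := by
          intro j' hj'
          have h' : (j' : ℕ) ≠ (i : ℕ) := fun h => hj' (Fin.ext h)
          refine Finset.sum_eq_zero fun k _ => ?_
          rcases eq_or_ne ((j' : ℕ)) ((i : ℕ) + 1) with h0 | h0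
          · rw [hH j (j', k) (by simp; omega) (by simp; omega), map_zero, mul_zero]
          · rw [hH i (j', k) h' h0, zero_mul]
        rw [Finset.sum_eq_single (⟨(i:ℕ), by omega⟩ : Fin (m+1)) (fun j' _ h => hz j' h)
          (by intro h; exact absurd (Finset.mem_univ _) h)]
        have e4 : (∑ k : Fin K, HmatK K m a b i ((⟨(i:ℕ), by omega⟩ : Fin (m+1)), k)
            * (starRingEnd ℂ) (HmatK K m a b j ((⟨(i:ℕ), by omega⟩ : Fin (m+1)), k)))
            = ∑ k, a ((j:ℕ)+2) k * (starRingEnd ℂ) (b ((j:ℕ)+1) k) :=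
          Finset.sum_congr rfl fun k _ => by
            simp only [HmatK]
            norm_num
            rw [if_neg hij, if_pos hsub.symm, show (i:ℕ)+1 = (j:ℕ)+2 by omega]
        rw [e4, llf, zero_add]
      · rw [Matrix.add_apply, Matrix.smul_apply, one_apply_ne (by simp [Fin.ext_iff]; omega), hsum]
        rw [show (trid (ddf P K a b) (uuf P K a b) (llf P K a b) m i j) = 0 by
          simp only [trid]; rw [if_neg hij, if_neg hsup, if_neg hsub]]
        rw [Finset.sum_eq_zero, smul_zero, add_zero]
        intro j' _
        refine Finset.sum_eq_zero fun k _ => ?_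
        rcases eq_or_ne ((j' : ℕ)) ((i : ℕ)) with h0 | h0
        · rw [hH j (j', k) (by simp; omega) (by simp; omega), map_zero, mul_zero]
        rcases eq_or_ne ((j' : ℕ)) ((i : ℕ) + 1) with h1 | h1
        · rw [hH j (j', k) (by simp; omega) (by simp; omega), map_zero, mul_zero]
        · rw [hH i (j', k) h0 h1, zero_mul]

/-! ### Measurability helpers -/

lemma meas_conj {α : Type*} [MeasurableSpace α] {g : α → ℂ} (hg : Measurable g) :
    Measurable fun x => (starRingEnd ℂ) (g x) :=
  Complex.continuous_conj.measurable.comp hg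

lemma meas_tridDet {α : Type*} [MeasurableSpace α] {d u l : α → ℕ → ℂ}
    (hd : ∀ i, Measurable fun x => d x i) (hu : ∀ i, Measurable fun x => u x i)
    (hl : ∀ i, Measurable fun x => l x i) (n : ℕ) :
    Measurable fun x => (trid (d x) (u x) (l x) n).det := by
  simp only [Matrix.det_apply']
  refine Finset.measurable_sum _ fun σ _ => Measurable.const_mul ?_ _
  refine Finset.measurable_prod _ fun i _ => ?_
  unfold trid
  split_ifs
  exacts [hd _, hu _, hl _, measurable_const]

lemma meas_ddf {α : Type*} [MeasurableSpace α] {K : ℕ} (P : ℝ) {A B : α → ℕ → Fin K → ℂ}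
    (hA : ∀ n k, Measurable fun x => A x n k) (hB : ∀ n k, Measurable fun x => B x n k) (i : ℕ) :
    Measurable fun x => ddf P K (A x) (B x) i := by
  unfold ddf
  apply measurable_const.add
  apply Measurable.const_mul
  exact (Finset.measurable_sum _ fun k _ => (hA _ _).mul (meas_conj (hA _ _))).add
    (Finset.measurable_sum _ fun k _ => (hB _ _).mul (meas_conj (hB _ _)))

lemma meas_uuf {α : Type*} [MeasurableSpace α] {K : ℕ} (P : ℝ) {A B : α → ℕ → Fin K → ℂ}
    (hA : ∀ n k, Measurable fun x => A x n k) (hB : ∀ n k, Measurable fun x => B x n k) (i : ℕ) :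
    Measurable fun x => uuf P K (A x) (B x) i := by
  unfold uuf
  apply Measurable.const_mul
  exact Finset.measurable_sum _ fun k _ => (hB _ _).mul (meas_conj (hA _ _))

lemma meas_llf {α : Type*} [MeasurableSpace α] {K : ℕ} (P : ℝ) {A B : α → ℕ → Fin K → ℂ}
    (hA : ∀ n k, Measurable fun x => A x n k) (hB : ∀ n k, Measurable fun x => B x n k) (i : ℕ) :
    Measurable fun x => llf P K (A x) (B x) i := by
  unfold llf
  apply Measurable.const_mul
  exact Finset.measurable_sum _ fun k _ => (hA _ _).mul (meas_conj (hB _ _))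

/-! ### Congruence helpers -/

lemma ddf_congr {K : ℕ} (P : ℝ) {A A' B B' : ℕ → Fin K → ℂ} (i : ℕ)
    (hA : ∀ k, A (i+1) k = A' (i+1) k) (hB : ∀ k, B (i+1) k = B' (i+1) k) :
    ddf P K A B i = ddf P K A' B' i := by
  unfold ddf
  have h1 : (∑ k, A (i+1) k * (starRingEnd ℂ) (A (i+1) k))
      = ∑ k, A' (i+1) k * (starRingEnd ℂ) (A' (i+1) k) :=
    Finset.sum_congr rfl fun k _ => by rw [hA k]
  have h2 : (∑ k, B (i+1) k * (starRingEnd ℂ) (B (i+1) k))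
      = ∑ k, B' (i+1) k * (starRingEnd ℂ) (B' (i+1) k) :=
    Finset.sum_congr rfl fun k _ => by rw [hB k]
  rw [h1, h2]

lemma uuf_congr {K : ℕ} (P : ℝ) {A A' B B' : ℕ → Fin K → ℂ} (i : ℕ)
    (hA : ∀ k, A (i+2) k = A' (i+2) k) (hB : ∀ k, B (i+1) k = B' (i+1) k) :
    uuf P K A B i = uuf P K A' B' i := by
  unfold uuf
  rw [Finset.sum_congr rfl fun k _ => by rw [hA k, hB k]]

lemma llf_congr {K : ℕ} (P : ℝ) {A A' B B' : ℕ → Fin K → ℂ} (i : ℕ)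
    (hA : ∀ k, A (i+2) k = A' (i+2) k) (hB : ∀ k, B (i+1) k = B' (i+1) k) :
    llf P K A B i = llf P K A' B' i := by
  unfold llf
  rw [Finset.sum_congr rfl fun k _ => by rw [hA k, hB k]]

lemma trid_congr {d u l d' u' l' : ℕ → ℂ} {n : ℕ}
    (hd : ∀ i < n, d i = d' i) (hu : ∀ i, i + 1 < n → u i = u' i)
    (hl : ∀ i, i + 1 < n → l i = l' i) :
    trid d u l n = trid d' u' l' n := by
  ext i j
  have hi := i.isLt
  have hj := j.isLt
  unfold trid
  split_ifs with h1 h2 h3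
  · exact hd i hi
  · exact hu i (by omega)
  · exact hl j (by omega)
  · rfl

/-! ### Probabilistic helpers -/

lemma indep_integral_mul {Ω : Type*} [MeasureSpace Ω] [IsProbabilityMeasure (ℙ : Measure Ω)]
    {X Y : Ω → ℂ} (hX : Measurable X) (hY : Measurable Y) (h : IndepFun X Y ℙ) :
    ∫ ω, X ω * Y ω ∂ℙ = (∫ ω, X ω ∂ℙ) * ∫ ω, Y ω ∂ℙ := by
  have hmap := (indepFun_iff_map_prod_eq_prod_map_map hX.aemeasurable hY.aemeasurable).mp h
  haveI : IsProbabilityMeasure (Measure.map Y ℙ) := Measure.isProbabilityMeasure_map hY.aemeasurable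
  have h1 : ∫ ω, X ω * Y ω ∂ℙ = ∫ p : ℂ × ℂ, p.1 * p.2 ∂(Measure.map (fun ω => (X ω, Y ω)) ℙ) := by
    rw [integral_map (f := fun p : ℂ × ℂ => p.1 * p.2) (hX.aemeasurable.prodMk hY.aemeasurable)
      (measurable_fst.mul measurable_snd).aestronglyMeasurable]
  have e1 : ∫ x : ℂ, x ∂(Measure.map X ℙ) = ∫ ω, X ω ∂ℙ :=
    integral_map hX.aemeasurable aestronglyMeasurable_id
  have e2 : ∫ y : ℂ, y ∂(Measure.map Y ℙ) = ∫ ω, Y ω ∂ℙ :=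
    integral_map hY.aemeasurable aestronglyMeasurable_id
  rw [h1, hmap, integral_prod_mul (fun x : ℂ => x) (fun y : ℂ => y), e1, e2]

lemma integrable_conj {Ω : Type*} [MeasureSpace Ω] {g : Ω → ℂ} (hg : Measurable g)
    (h : Integrable g ℙ) : Integrable (fun ω => (starRingEnd ℂ) (g ω)) ℙ := by
  refine h.norm.mono' (meas_conj hg).aestronglyMeasurable (ae_of_all _ fun ω => ?_)
  simp [RCLike.norm_conj]

lemma indepFun_comp_restrict {Ω : Type*} [MeasureSpace Ω] {ι : Type*} {f : ι → Ω → ℂ}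
    (hmeas : ∀ i, Measurable (f i))
    (hind : iIndepFun f ℙ)
    (S T : Finset ι) (hST : Disjoint S T)
    {Φ : (S → ℂ) → ℂ} {Ψ : (T → ℂ) → ℂ} (hΦ : Measurable Φ) (hΨ : Measurable Ψ) :
    IndepFun (fun ω => Φ fun i => f i ω) (fun ω => Ψ fun i => f i ω) ℙ :=
  (hind.indepFun_finset S T hST hmeas).comp hΦ hΨ

/-- lookup-with-default-0 of an `a`-coordinate in a restricted tuple. -/
noncomputable def lkA {K : ℕ} (S : Finset ((ℕ × Fin K) ⊕ (ℕ × Fin K))) (x : S → ℂ) :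
    ℕ → Fin K → ℂ :=
  fun n k => if h : (Sum.inl (n, k) : (ℕ × Fin K) ⊕ (ℕ × Fin K)) ∈ S then x ⟨Sum.inl (n, k), h⟩ else 0

noncomputable def lkB {K : ℕ} (S : Finset ((ℕ × Fin K) ⊕ (ℕ × Fin K))) (x : S → ℂ) :
    ℕ → Fin K → ℂ :=
  fun n k => if h : (Sum.inr (n, k) : (ℕ × Fin K) ⊕ (ℕ × Fin K)) ∈ S then x ⟨Sum.inr (n, k), h⟩ else 0

lemma meas_lkA {K : ℕ} (S : Finset ((ℕ × Fin K) ⊕ (ℕ × Fin K))) (n : ℕ) (k : Fin K) :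
    Measurable fun x : S → ℂ => lkA S x n k := by
  unfold lkA
  by_cases h : (Sum.inl (n, k) : (ℕ × Fin K) ⊕ (ℕ × Fin K)) ∈ S
  · simp only [dif_pos h]; exact measurable_pi_apply _
  · simp only [dif_neg h]; exact measurable_const

lemma meas_lkB {K : ℕ} (S : Finset ((ℕ × Fin K) ⊕ (ℕ × Fin K))) (n : ℕ) (k : Fin K) :
    Measurable fun x : S → ℂ => lkB S x n k := by
  unfold lkB
  by_cases h : (Sum.inr (n, k) : (ℕ × Fin K) ⊕ (ℕ × Fin K)) ∈ S
  · simp only [dif_pos h]; exact measurable_pi_apply _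
  · simp only [dif_neg h]; exact measurable_const

end Statement8Aux

open Statement8Aux

theorem statement8
    {Ω : Type*} [MeasureSpace Ω] [IsProbabilityMeasure (ℙ : Measure Ω)]
    (K : ℕ) (hK : 1 ≤ K) (P : ℝ) (hP : 0 < P)
    (π : Measure ℂ) [IsProbabilityMeasure π]
    (hmom : Integrable (fun x : ℂ => ‖x‖ ^ 2) π)
    (a b : ℕ → Fin K → Ω → ℂ)
    (ha_meas : ∀ n k, Measurable (a n k)) (hb_meas : ∀ n k, Measurable (b n k))
    (ha_law : ∀ n k, Measure.map (a n k) ℙ = π)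
    (hb_law : ∀ n k, Measure.map (b n k) ℙ = π)
    (h_indep : iIndepFun
      (Sum.elim (fun p : ℕ × Fin K => a p.1 p.2) (fun p : ℕ × Fin K => b p.1 p.2)) ℙ)
    -- the moments and the constants A, B
    (m1 : ℂ) (hm1 : m1 = ∫ x, x ∂π)
    (m2 : ℝ) (hm2 : m2 = ∫ x, ‖x‖ ^ 2 ∂π)
    (A B : ℝ)
    (hA : A = 1 + 2 * P * m2)
    (hB : B = P ^ 2 / K * (m2 ^ 2 + (K - 1 : ℝ) * ‖m1‖ ^ 4))
    -- `D m = E[det G_m]`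
    (D : ℕ → ℂ)
    (hD : ∀ m : ℕ,
      D m = ∫ ω, detGK K m P (fun n k => a n k ω) (fun n k => b n k ω) ∂ℙ) :
    D 1 = (A : ℂ) ∧ D 2 = (A : ℂ) ^ 2 - (B : ℂ) ∧
      ∀ m : ℕ, 3 ≤ m → D m = (A : ℂ) * D (m - 1) - (B : ℂ) * D (m - 2) := by
  classical
  have hKR : (K : ℝ) ≠ 0 := by positivity
  have hKC : (K : ℂ) ≠ 0 := by exact_mod_cast Nat.cast_ne_zero.mpr (by omega)
  set ι := (ℕ × Fin K) ⊕ (ℕ × Fin K) with hι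
  set ff : ι → Ω → ℂ := Sum.elim (fun p => a p.1 p.2) (fun p => b p.1 p.2) with hff
  have hffm : ∀ i : ι, Measurable (ff i) := by
    rintro (p | p)
    · exact ha_meas p.1 p.2
    · exact hb_meas p.1 p.2
  -- per-coordinate integrability and moments
  have hgen : ∀ g : Ω → ℂ, Measurable g → Measure.map g ℙ = π →
      Integrable g ℙ ∧ Integrable (fun ω => g ω * (starRingEnd ℂ) (g ω)) ℙ ∧
      (∫ ω, g ω ∂ℙ) = m1 ∧ (∫ ω, g ω * (starRingEnd ℂ) (g ω) ∂ℙ) = (m2 : ℂ) := by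
    intro g hg hlaw
    have habs : Integrable (fun ω => ‖g ω‖ ^ 2) ℙ := by
      have h1 : Integrable (fun x : ℂ => ‖x‖ ^ 2) (Measure.map g ℙ) := by
        rw [hlaw]; exact hmom
      exact (integrable_map_measure
        ((continuous_norm.pow 2).aestronglyMeasurable) hg.aemeasurable).mp h1
    have hmc : (fun ω => g ω * (starRingEnd ℂ) (g ω))
        = fun ω => ((‖g ω‖ ^ 2 : ℝ) : ℂ) := by
      funext ω; rw [Complex.mul_conj, Complex.sq_norm]
    have hIg : Integrable g ℙ := by
      have hm : MemLp g 2 ℙ := (memLp_two_iff_integrable_sq_norm hg.aestronglyMeasurable).mpr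
        (by simpa using habs)
      exact hm.integrable one_le_two
    refine ⟨hIg, ?_, ?_, ?_⟩
    · rw [hmc]; exact habs.ofReal
    · have e1 : ∫ x : ℂ, x ∂(Measure.map g ℙ) = ∫ ω, g ω ∂ℙ :=
        integral_map hg.aemeasurable aestronglyMeasurable_id
      rw [hm1, ← hlaw, e1]
    · have e0 : (∫ ω, ((‖g ω‖ ^ 2 : ℝ) : ℂ) ∂ℙ)
          = (((∫ ω, ‖g ω‖ ^ 2 ∂ℙ) : ℝ) : ℂ) := integral_ofReal
      have e1 : (∫ ω, ‖g ω‖ ^ 2 ∂ℙ) = ∫ x : ℂ, ‖x‖ ^ 2 ∂(Measure.map g ℙ) :=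
        (integral_map hg.aemeasurable ((continuous_norm.pow 2)).aestronglyMeasurable).symm
      rw [hmc, e0, e1, hlaw, hm2]
  have hgA := fun n k => hgen (a n k) (ha_meas n k) (ha_law n k)
  have hgB := fun n k => hgen (b n k) (hb_meas n k) (hb_law n k)
  set ρ : ℂ := ((P / K : ℝ) : ℂ) with hρ
  -- the random determinant sequence
  set F : ℕ → Ω → ℂ := fun n ω =>
    (trid (ddf P K (fun p q => a p q ω) (fun p q => b p q ω))
      (uuf P K (fun p q => a p q ω) (fun p q => b p q ω))
      (llf P K (fun p q => a p q ω) (fun p q => b p q ω)) n).det with hFdef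
  have hameas' : ∀ n k, Measurable fun ω => (fun p q => a p q ω) n k := fun n k => ha_meas n k
  have hbmeas' : ∀ n k, Measurable fun ω => (fun p q => b p q ω) n k := fun n k => hb_meas n k
  have hFmeas : ∀ n, Measurable (F n) := fun n =>
    meas_tridDet (meas_ddf P hameas' hbmeas') (meas_uuf P hameas' hbmeas')
      (meas_llf P hameas' hbmeas') n
  have hDdmeas : ∀ i, Measurable fun ω => ddf P K (fun p q => a p q ω) (fun p q => b p q ω) i :=
    meas_ddf P hameas' hbmeas'
  have hULmeas : ∀ n, Measurable fun ω =>
      uuf P K (fun p q => a p q ω) (fun p q => b p q ω) n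
        * llf P K (fun p q => a p q ω) (fun p q => b p q ω) n :=
    fun n => (meas_uuf P hameas' hbmeas' n).mul (meas_llf P hameas' hbmeas' n)
  -- expectation of the diagonal terms
  have hIntDd : ∀ i, Integrable
      (fun ω => ddf P K (fun p q => a p q ω) (fun p q => b p q ω) i) ℙ := by
    intro i
    unfold ddf
    have hSa : Integrable (fun ω => ∑ k, a (i+1) k ω * (starRingEnd ℂ) (a (i+1) k ω)) ℙ :=
      integrable_finset_sum _ fun k _ => (hgA (i+1) k).2.1
    have hSb : Integrable (fun ω => ∑ k, b (i+1) k ω * (starRingEnd ℂ) (b (i+1) k ω)) ℙ :=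
      integrable_finset_sum _ fun k _ => (hgB (i+1) k).2.1
    have hSum : Integrable (fun ω => (∑ k, a (i+1) k ω * (starRingEnd ℂ) (a (i+1) k ω))
        + ∑ k, b (i+1) k ω * (starRingEnd ℂ) (b (i+1) k ω)) ℙ := hSa.add hSb
    have hMul : Integrable (fun ω => ρ * ((∑ k, a (i+1) k ω * (starRingEnd ℂ) (a (i+1) k ω))
        + ∑ k, b (i+1) k ω * (starRingEnd ℂ) (b (i+1) k ω))) ℙ := hSum.const_mul ρ
    exact (integrable_const 1).add hMul
  have hEDd : ∀ i, (∫ ω, ddf P K (fun p q => a p q ω) (fun p q => b p q ω) i ∂ℙ) = (A : ℂ) := by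
    intro i
    unfold ddf
    have hSa : Integrable (fun ω => ∑ k, a (i+1) k ω * (starRingEnd ℂ) (a (i+1) k ω)) ℙ :=
      integrable_finset_sum _ fun k _ => (hgA (i+1) k).2.1
    have hSb : Integrable (fun ω => ∑ k, b (i+1) k ω * (starRingEnd ℂ) (b (i+1) k ω)) ℙ :=
      integrable_finset_sum _ fun k _ => (hgB (i+1) k).2.1
    have hSum : Integrable (fun ω => (∑ k, a (i+1) k ω * (starRingEnd ℂ) (a (i+1) k ω))
        + ∑ k, b (i+1) k ω * (starRingEnd ℂ) (b (i+1) k ω)) ℙ := hSa.add hSb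
    have hMul : Integrable (fun ω => ρ * ((∑ k, a (i+1) k ω * (starRingEnd ℂ) (a (i+1) k ω))
        + ∑ k, b (i+1) k ω * (starRingEnd ℂ) (b (i+1) k ω))) ℙ := hSum.const_mul ρ
    rw [integral_add (integrable_const 1) hMul, integral_const, integral_const_mul,
      integral_add hSa hSb,
      integral_finset_sum _ fun k _ => (hgA (i+1) k).2.1,
      integral_finset_sum _ fun k _ => (hgB (i+1) k).2.1]
    rw [Finset.sum_congr rfl fun k _ => (hgA (i+1) k).2.2.2,
      Finset.sum_congr rfl fun k _ => (hgB (i+1) k).2.2.2]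
    simp only [Finset.sum_const, Finset.card_univ, Fintype.card_fin, nsmul_eq_mul, measure_univ,
      ENNReal.toReal_one, probReal_univ, one_smul]
    rw [hA, hρ]
    push_cast
    field_simp
    ring
  -- expectation of the off-diagonal product
  have hBkl : ∀ n (k l : Fin K), Integrable (fun ω => b n k ω * (starRingEnd ℂ) (b n l ω)) ℙ ∧
      (∫ ω, b n k ω * (starRingEnd ℂ) (b n l ω) ∂ℙ)
        = (if k = l then (m2 : ℂ) else m1 * (starRingEnd ℂ) m1) := by
    intro n k l
    by_cases hkl : k = l
    · subst hkl
      exact ⟨(hgB n k).2.1, by rw [if_pos rfl]; exact (hgB n k).2.2.2⟩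
    · have hind : IndepFun (b n k) (fun ω => (starRingEnd ℂ) (b n l ω)) ℙ := by
        have h0 : IndepFun (ff (Sum.inr (n, k))) (ff (Sum.inr (n, l))) ℙ :=
          h_indep.indepFun (by simp [hkl])
        exact h0.comp measurable_id (meas_conj measurable_id)
      refine ⟨hind.integrable_mul (hgB n k).1 (integrable_conj (hb_meas n l) (hgB n l).1), ?_⟩
      rw [if_neg hkl, indep_integral_mul (hb_meas n k) (meas_conj (hb_meas n l)) hind,
        (hgB n k).2.2.1, integral_conj, (hgB n l).2.2.1]
  have hAkl : ∀ n (k l : Fin K), Integrable (fun ω => (starRingEnd ℂ) (a n k ω) * a n l ω) ℙ ∧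
      (∫ ω, (starRingEnd ℂ) (a n k ω) * a n l ω ∂ℙ)
        = (if k = l then (m2 : ℂ) else (starRingEnd ℂ) m1 * m1) := by
    intro n k l
    by_cases hkl : k = l
    · subst hkl
      have hcomm : (fun ω => (starRingEnd ℂ) (a n k ω) * a n k ω)
          = fun ω => a n k ω * (starRingEnd ℂ) (a n k ω) := funext fun ω => mul_comm _ _
      refine ⟨by rw [hcomm]; exact (hgA n k).2.1, ?_⟩
      rw [if_pos rfl, hcomm]; exact (hgA n k).2.2.2
    · have hind : IndepFun (fun ω => (starRingEnd ℂ) (a n k ω)) (a n l) ℙ := by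
        have h0 : IndepFun (ff (Sum.inl (n, k))) (ff (Sum.inl (n, l))) ℙ :=
          h_indep.indepFun (by simp [hkl])
        exact h0.comp (meas_conj measurable_id) measurable_id
      refine ⟨hind.integrable_mul (integrable_conj (ha_meas n k) (hgA n k).1) (hgA n l).1, ?_⟩
      rw [if_neg hkl, indep_integral_mul (meas_conj (ha_meas n k)) (ha_meas n l) hind,
        integral_conj, (hgA n k).2.2.1, (hgA n l).2.2.1]
  have hindBA : ∀ n (k l : Fin K),
      IndepFun (fun ω => b (n+1) k ω * (starRingEnd ℂ) (b (n+1) l ω))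
        (fun ω => (starRingEnd ℂ) (a (n+2) k ω) * a (n+2) l ω) ℙ := by
    intro n k l
    have h4 := h_indep.indepFun_prodMk_prodMk hffm
      (Sum.inr (n+1, k)) (Sum.inr (n+1, l)) (Sum.inl (n+2, k)) (Sum.inl (n+2, l))
      (by simp) (by simp) (by simp) (by simp)
    exact h4.comp (measurable_fst.mul (meas_conj measurable_snd))
      ((meas_conj measurable_fst).mul measurable_snd)
  have hULsum : ∀ n, (fun ω =>
      uuf P K (fun p q => a p q ω) (fun p q => b p q ω) n
        * llf P K (fun p q => a p q ω) (fun p q => b p q ω) n)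
      = fun ω => ∑ k : Fin K, ∑ l : Fin K, ρ^2
          * ((b (n+1) k ω * (starRingEnd ℂ) (b (n+1) l ω))
            * ((starRingEnd ℂ) (a (n+2) k ω) * a (n+2) l ω)) := by
    intro n
    funext ω
    unfold uuf llf
    rw [mul_mul_mul_comm, Finset.sum_mul_sum, Finset.mul_sum]
    refine Finset.sum_congr rfl fun k _ => ?_
    rw [Finset.mul_sum]
    refine Finset.sum_congr rfl fun l _ => ?_
    ring
  have hIntUL : ∀ n, Integrable (fun ω =>
      uuf P K (fun p q => a p q ω) (fun p q => b p q ω) n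
        * llf P K (fun p q => a p q ω) (fun p q => b p q ω) n) ℙ := by
    intro n
    rw [hULsum n]
    refine integrable_finset_sum _ fun k _ => integrable_finset_sum _ fun l _ => ?_
    exact (((hindBA n k l).integrable_mul (hBkl (n+1) k l).1 (hAkl (n+2) k l).1).const_mul _)
  have hmeasB : ∀ n (k l : Fin K), Measurable fun ω => b n k ω * (starRingEnd ℂ) (b n l ω) :=
    fun n k l => (hb_meas n k).mul (meas_conj (hb_meas n l))
  have hmeasA : ∀ n (k l : Fin K), Measurable fun ω => (starRingEnd ℂ) (a n k ω) * a n l ω :=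
    fun n k l => (meas_conj (ha_meas n k)).mul (ha_meas n l)
  have hEUL : ∀ n, (∫ ω,
      uuf P K (fun p q => a p q ω) (fun p q => b p q ω) n
        * llf P K (fun p q => a p q ω) (fun p q => b p q ω) n ∂ℙ) = (B : ℂ) := by
    intro n
    rw [hULsum n]
    have hIkl : ∀ k l : Fin K, Integrable (fun ω => ρ^2
        * ((b (n+1) k ω * (starRingEnd ℂ) (b (n+1) l ω))
          * ((starRingEnd ℂ) (a (n+2) k ω) * a (n+2) l ω))) ℙ := fun k l =>
      (((hindBA n k l).integrable_mul (hBkl (n+1) k l).1 (hAkl (n+2) k l).1).const_mul _)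
    have hIk : ∀ k : Fin K, Integrable (fun ω => ∑ l : Fin K, ρ^2
        * ((b (n+1) k ω * (starRingEnd ℂ) (b (n+1) l ω))
          * ((starRingEnd ℂ) (a (n+2) k ω) * a (n+2) l ω))) ℙ := fun k =>
      integrable_finset_sum _ fun l _ => hIkl k l
    rw [integral_finset_sum _ fun k _ => hIk k]
    rw [Finset.sum_congr rfl fun k _ => integral_finset_sum _ fun l _ => hIkl k l]
    have hterm : ∀ k l : Fin K, (∫ ω, ρ^2
        * ((b (n+1) k ω * (starRingEnd ℂ) (b (n+1) l ω))
          * ((starRingEnd ℂ) (a (n+2) k ω) * a (n+2) l ω)) ∂ℙ)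
        = if k = l then ρ^2 * ((m2:ℂ) * (m2:ℂ))
          else ρ^2 * ((m1 * (starRingEnd ℂ) m1) * ((starRingEnd ℂ) m1 * m1)) := by
      intro k l
      rw [integral_const_mul, indep_integral_mul (hmeasB (n+1) k l) (hmeasA (n+2) k l)
        (hindBA n k l), (hBkl (n+1) k l).2, (hAkl (n+2) k l).2]
      by_cases hkl : k = l <;> simp [hkl]
    rw [Finset.sum_congr rfl fun k _ => Finset.sum_congr rfl fun l _ => hterm k l]
    have hrow : ∀ k : Fin K, (∑ l : Fin K, if k = l then ρ^2 * ((m2:ℂ) * (m2:ℂ))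
        else ρ^2 * ((m1 * (starRingEnd ℂ) m1) * ((starRingEnd ℂ) m1 * m1)))
        = ρ^2 * ((m2:ℂ) * (m2:ℂ))
          + ((K:ℂ) - 1) * (ρ^2 * ((m1 * (starRingEnd ℂ) m1) * ((starRingEnd ℂ) m1 * m1))) := by
      intro k
      set X := ρ^2 * ((m2:ℂ) * (m2:ℂ)) with hX
      set Y := ρ^2 * ((m1 * (starRingEnd ℂ) m1) * ((starRingEnd ℂ) m1 * m1)) with hY
      have h1 : (∑ l : Fin K, if k = l then X else Y)
          = ∑ l : Fin K, (Y + if k = l then X - Y else 0) :=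
        Finset.sum_congr rfl fun l _ => by by_cases h : k = l <;> simp [h]
      rw [h1, Finset.sum_add_distrib, Finset.sum_const, Finset.sum_ite_eq,
        if_pos (Finset.mem_univ k)]
      simp only [Finset.card_univ, Fintype.card_fin, nsmul_eq_mul]
      ring
    rw [Finset.sum_congr rfl fun k _ => hrow k]
    rw [Finset.sum_const, Finset.card_univ, Fintype.card_fin, nsmul_eq_mul]
    have hmm : m1 * (starRingEnd ℂ) m1 = ((‖m1‖ ^ 2 : ℝ) : ℂ) := by
      rw [Complex.mul_conj, Complex.sq_norm]
    have hmm' : (starRingEnd ℂ) m1 * m1 = ((‖m1‖ ^ 2 : ℝ) : ℂ) := by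
      rw [mul_comm, Complex.mul_conj, Complex.sq_norm]
    rw [hmm, hmm', hB, hρ]
    push_cast
    field_simp
  -- pointwise recursion and base values
  have hFrec : ∀ n ω, F (n+2) ω
      = ddf P K (fun p q => a p q ω) (fun p q => b p q ω) (n+1) * F (n+1) ω
        - (uuf P K (fun p q => a p q ω) (fun p q => b p q ω) n
            * llf P K (fun p q => a p q ω) (fun p q => b p q ω) n) * F n ω := by
    intro n ω
    simp only [hFdef]
    exact trid_det_rec _ _ _ n
  have hF0 : ∀ ω, F 0 ω = 1 := fun ω => Matrix.det_fin_zero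
  have hF1 : ∀ ω, F 1 ω = ddf P K (fun p q => a p q ω) (fun p q => b p q ω) 0 := by
    intro ω
    simp only [hFdef]
    rw [Matrix.det_fin_one]
    simp [trid]
  -- independence of determinant and new entries via finsets
  set SS : ℕ → Finset ι := fun n =>
    ((Finset.range (n+1)) ×ˢ (Finset.univ : Finset (Fin K))).image Sum.inl
      ∪ ((Finset.range (n+1)) ×ˢ (Finset.univ : Finset (Fin K))).image Sum.inr with hSS
  have hmemSA : ∀ n j (k : Fin K), j ≤ n → (Sum.inl (j, k) : ι) ∈ SS n := by
    intro n j k hj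
    simp only [hSS, Finset.mem_union, Finset.mem_image, Finset.mem_product, Finset.mem_range]
    exact Or.inl ⟨(j, k), ⟨by omega, Finset.mem_univ _⟩, rfl⟩
  have hmemSB : ∀ n j (k : Fin K), j ≤ n → (Sum.inr (j, k) : ι) ∈ SS n := by
    intro n j k hj
    simp only [hSS, Finset.mem_union, Finset.mem_image, Finset.mem_product, Finset.mem_range]
    exact Or.inr ⟨(j, k), ⟨by omega, Finset.mem_univ _⟩, rfl⟩
  have hSSfirst : ∀ n (x : ι), x ∈ SS n →
      (Sum.elim (fun p : ℕ × Fin K => p.1) (fun p : ℕ × Fin K => p.1) x) ≤ n := by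
    intro n x hx
    simp only [hSS, Finset.mem_union, Finset.mem_image, Finset.mem_product,
      Finset.mem_range] at hx
    rcases hx with ⟨p, ⟨hp, _⟩, rfl⟩ | ⟨p, ⟨hp, _⟩, rfl⟩ <;> simpa using by omega
  -- the representation of F n through coordinates in SS n
  have hFrep : ∀ n, F n = fun ω =>
      (fun x : ↥(SS n) → ℂ =>
        (trid (ddf P K (lkA (SS n) x) (lkB (SS n) x)) (uuf P K (lkA (SS n) x) (lkB (SS n) x))
          (llf P K (lkA (SS n) x) (lkB (SS n) x)) n).det) (fun i => ff i ω) := by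
    intro n
    funext ω
    simp only [hFdef]
    congr 1
    refine (trid_congr ?_ ?_ ?_).symm
    · intro i hi
      refine ddf_congr P i (fun k => ?_) (fun k => ?_)
      · simp only [lkA, dif_pos (hmemSA n (i+1) k (by omega))]; rfl
      · simp only [lkB, dif_pos (hmemSB n (i+1) k (by omega))]; rfl
    · intro i hi
      refine uuf_congr P i (fun k => ?_) (fun k => ?_)
      · simp only [lkA, dif_pos (hmemSA n (i+2) k (by omega))]; rfl
      · simp only [lkB, dif_pos (hmemSB n (i+1) k (by omega))]; rfl
    · intro i hi
      refine llf_congr P i (fun k => ?_) (fun k => ?_)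
      · simp only [lkA, dif_pos (hmemSA n (i+2) k (by omega))]; rfl
      · simp only [lkB, dif_pos (hmemSB n (i+1) k (by omega))]; rfl
  -- finsets for the new entries
  set TD : ℕ → Finset ι := fun n =>
    (({n+2} : Finset ℕ) ×ˢ (Finset.univ : Finset (Fin K))).image Sum.inl
      ∪ (({n+2} : Finset ℕ) ×ˢ (Finset.univ : Finset (Fin K))).image Sum.inr with hTD
  set TU : ℕ → Finset ι := fun n =>
    (({n+2} : Finset ℕ) ×ˢ (Finset.univ : Finset (Fin K))).image Sum.inl
      ∪ (({n+1} : Finset ℕ) ×ˢ (Finset.univ : Finset (Fin K))).image Sum.inr with hTU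
  have hmemTDA : ∀ n (k : Fin K), (Sum.inl (n+2, k) : ι) ∈ TD n := by
    intro n k
    simp only [hTD, Finset.mem_union, Finset.mem_image, Finset.mem_product, Finset.mem_singleton]
    exact Or.inl ⟨(n+2, k), ⟨rfl, Finset.mem_univ _⟩, rfl⟩
  have hmemTDB : ∀ n (k : Fin K), (Sum.inr (n+2, k) : ι) ∈ TD n := by
    intro n k
    simp only [hTD, Finset.mem_union, Finset.mem_image, Finset.mem_product, Finset.mem_singleton]
    exact Or.inr ⟨(n+2, k), ⟨rfl, Finset.mem_univ _⟩, rfl⟩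
  have hmemTUA : ∀ n (k : Fin K), (Sum.inl (n+2, k) : ι) ∈ TU n := by
    intro n k
    simp only [hTU, Finset.mem_union, Finset.mem_image, Finset.mem_product, Finset.mem_singleton]
    exact Or.inl ⟨(n+2, k), ⟨rfl, Finset.mem_univ _⟩, rfl⟩
  have hmemTUB : ∀ n (k : Fin K), (Sum.inr (n+1, k) : ι) ∈ TU n := by
    intro n k
    simp only [hTU, Finset.mem_union, Finset.mem_image, Finset.mem_product, Finset.mem_singleton]
    exact Or.inr ⟨(n+1, k), ⟨rfl, Finset.mem_univ _⟩, rfl⟩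
  have hdisjD : ∀ n, Disjoint (TD n) (SS (n+1)) := by
    intro n
    rw [Finset.disjoint_left]
    intro x hx hx'
    have h1 := hSSfirst (n+1) x hx'
    simp only [hTD, Finset.mem_union, Finset.mem_image, Finset.mem_product,
      Finset.mem_singleton] at hx
    rcases hx with ⟨p, ⟨hp, _⟩, rfl⟩ | ⟨p, ⟨hp, _⟩, rfl⟩ <;> simp at h1 <;> omega
  have hdisjU : ∀ n, Disjoint (TU n) (SS n) := by
    intro n
    rw [Finset.disjoint_left]
    intro x hx hx'
    have h1 := hSSfirst n x hx'
    simp only [hTU, Finset.mem_union, Finset.mem_image, Finset.mem_product,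
      Finset.mem_singleton] at hx
    rcases hx with ⟨p, ⟨hp, _⟩, rfl⟩ | ⟨p, ⟨hp, _⟩, rfl⟩ <;> simp at h1 <;> omega
  -- measurable Φ functions
  have hΦF : ∀ n, Measurable fun x : ↥(SS n) → ℂ =>
      (trid (ddf P K (lkA (SS n) x) (lkB (SS n) x)) (uuf P K (lkA (SS n) x) (lkB (SS n) x))
        (llf P K (lkA (SS n) x) (lkB (SS n) x)) n).det := fun n =>
    meas_tridDet (meas_ddf P (fun p q => meas_lkA _ p q) (fun p q => meas_lkB _ p q))
      (meas_uuf P (fun p q => meas_lkA _ p q) (fun p q => meas_lkB _ p q))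
      (meas_llf P (fun p q => meas_lkA _ p q) (fun p q => meas_lkB _ p q)) n
  -- independence : new diagonal entry vs older determinant
  have hindD : ∀ n, IndepFun
      (fun ω => ddf P K (fun p q => a p q ω) (fun p q => b p q ω) (n+1)) (F (n+1)) ℙ := by
    intro n
    have hrep : (fun ω => ddf P K (fun p q => a p q ω) (fun p q => b p q ω) (n+1))
        = fun ω => (fun x : ↥(TD n) → ℂ =>
            ddf P K (lkA (TD n) x) (lkB (TD n) x) (n+1)) (fun i => ff i ω) := by
      funext ω
      refine (ddf_congr P (n+1) (fun k => ?_) (fun k => ?_)).symm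
      · simp only [lkA, dif_pos (hmemTDA n k)]; rfl
      · simp only [lkB, dif_pos (hmemTDB n k)]; rfl
    rw [hrep, hFrep (n+1)]
    exact indepFun_comp_restrict hffm h_indep (TD n) (SS (n+1)) (hdisjD n)
      (meas_ddf P (fun p q => meas_lkA _ p q) (fun p q => meas_lkB _ p q) (n+1)) (hΦF (n+1))
  have hindU : ∀ n, IndepFun
      (fun ω => uuf P K (fun p q => a p q ω) (fun p q => b p q ω) n
        * llf P K (fun p q => a p q ω) (fun p q => b p q ω) n) (F n) ℙ := by
    intro n
    have hrep : (fun ω => uuf P K (fun p q => a p q ω) (fun p q => b p q ω) n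
        * llf P K (fun p q => a p q ω) (fun p q => b p q ω) n)
        = fun ω => (fun x : ↥(TU n) → ℂ =>
            uuf P K (lkA (TU n) x) (lkB (TU n) x) n
              * llf P K (lkA (TU n) x) (lkB (TU n) x) n) (fun i => ff i ω) := by
      funext ω
      have h1 : uuf P K (fun p q => a p q ω) (fun p q => b p q ω) n
          = uuf P K (lkA (TU n) (fun i => ff i ω)) (lkB (TU n) (fun i => ff i ω)) n := by
        refine uuf_congr P n (fun k => ?_) (fun k => ?_)
        · simp only [lkA, dif_pos (hmemTUA n k)]; rfl
        · simp only [lkB, dif_pos (hmemTUB n k)]; rfl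
      have h2 : llf P K (fun p q => a p q ω) (fun p q => b p q ω) n
          = llf P K (lkA (TU n) (fun i => ff i ω)) (lkB (TU n) (fun i => ff i ω)) n := by
        refine llf_congr P n (fun k => ?_) (fun k => ?_)
        · simp only [lkA, dif_pos (hmemTUA n k)]; rfl
        · simp only [lkB, dif_pos (hmemTUB n k)]; rfl
      rw [h1, h2]
    rw [hrep, hFrep n]
    exact indepFun_comp_restrict hffm h_indep (TU n) (SS n) (hdisjU n)
      ((meas_uuf P (fun p q => meas_lkA _ p q) (fun p q => meas_lkB _ p q) n).mul
        (meas_llf P (fun p q => meas_lkA _ p q) (fun p q => meas_lkB _ p q) n)) (hΦF n)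
  -- integrability of F n, by two-step induction
  have hIntF : ∀ n, Integrable (F n) ℙ := by
    have key : ∀ n, Integrable (F n) ℙ ∧ Integrable (F (n+1)) ℙ := by
      intro n
      induction n with
      | zero =>
        constructor
        · exact (integrable_const 1).congr (ae_of_all _ fun ω => (hF0 ω).symm)
        · exact (hIntDd 0).congr (ae_of_all _ fun ω => (hF1 ω).symm)
      | succ n ih =>
        refine ⟨ih.2, ?_⟩
        have heq : F (n+2) = fun ω =>
            ddf P K (fun p q => a p q ω) (fun p q => b p q ω) (n+1) * F (n+1) ω
              - (uuf P K (fun p q => a p q ω) (fun p q => b p q ω) n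
                  * llf P K (fun p q => a p q ω) (fun p q => b p q ω) n) * F n ω :=
          funext fun ω => hFrec n ω
        rw [heq]
        exact (((hindD n).integrable_mul (hIntDd (n+1)) ih.2).sub
          (((hindU n).integrable_mul (hIntUL n) ih.1)))
    exact fun n => (key n).1
  -- the integral recursion
  have hIrec : ∀ n, (∫ ω, F (n+2) ω ∂ℙ)
      = (A:ℂ) * (∫ ω, F (n+1) ω ∂ℙ) - (B:ℂ) * ∫ ω, F n ω ∂ℙ := by
    intro n
    have heq : (fun ω => F (n+2) ω) = fun ω =>
        ddf P K (fun p q => a p q ω) (fun p q => b p q ω) (n+1) * F (n+1) ω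
          - (uuf P K (fun p q => a p q ω) (fun p q => b p q ω) n
              * llf P K (fun p q => a p q ω) (fun p q => b p q ω) n) * F n ω :=
      funext fun ω => hFrec n ω
    have hi1 : Integrable (fun ω =>
        ddf P K (fun p q => a p q ω) (fun p q => b p q ω) (n+1) * F (n+1) ω) ℙ :=
      (hindD n).integrable_mul (hIntDd (n+1)) (hIntF (n+1))
    have hi2 : Integrable (fun ω =>
        (uuf P K (fun p q => a p q ω) (fun p q => b p q ω) n
          * llf P K (fun p q => a p q ω) (fun p q => b p q ω) n) * F n ω) ℙ :=
      (hindU n).integrable_mul (hIntUL n) (hIntF n)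
    rw [heq, integral_sub hi1 hi2,
      indep_integral_mul (hDdmeas (n+1)) (hFmeas (n+1)) (hindD n),
      indep_integral_mul (hULmeas n) (hFmeas n) (hindU n), hEDd (n+1), hEUL n]
  -- base integrals
  have hI0 : (∫ ω, F 0 ω ∂ℙ) = 1 := by
    rw [integral_congr_ae (ae_of_all _ fun ω => hF0 ω)]
    simp
  have hI1 : (∫ ω, F 1 ω ∂ℙ) = (A:ℂ) := by
    rw [integral_congr_ae (ae_of_all _ fun ω => hF1 ω)]
    exact hEDd 0
  -- identify D with ∫ F
  have hDF : ∀ m, D m = ∫ ω, F m ω ∂ℙ := by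
    intro m
    rw [hD m]
    refine integral_congr_ae (ae_of_all _ fun ω => ?_)
    simp only [hFdef]
    exact detGK_eq_trid K m P _ _
  refine ⟨?_, ?_, ?_⟩
  · rw [hDF 1, hI1]
  · rw [hDF 2, show (2:ℕ) = 0 + 2 from rfl, hIrec 0, hI1, hI0, mul_one, sq]
  · intro m hm
    obtain ⟨n, rfl⟩ : ∃ n, m = n + 2 := ⟨m - 2, by omega⟩
    rw [hDF (n+2), hIrec n, show n + 2 - 1 = n + 1 by omega, show n + 2 - 2 = n by omega,
      hDF (n+1), hDF n]
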